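/- Let A = !![a₁,a₂,a₃; b₁,b₂,b₃; c₁,c₂,c₃] be a real 3×3 matrix with D := det A ≠ 0, let (x,y) ∈ ℝ² with h := c₁x+c₂y+c₃ ≠ 0, and let T(x,y) = ((a₁x+a₂y+a₃)/h, (b₁x+b₂y+b₃)/h). Suppose u and ũ are real-valued functions on ℝ², u differentiable at (x,y), ũ differentiable at T(x,y), and ũ(T(x',y')) = u(x',y') for all (x',y') in some neighborhood of (x,y). Write (p,q) for the gradient of u at (x,y). Then the partial derivatives of ũ at T(x,y) are given by: ∂ũ/∂x̃ = (h/D)·(−(b₁c₂−b₂c₁)(px+qy) + (b₂c₃−b₃c₂)p − (b₁c₃−b₃c₁)q) and ∂ũ/∂ỹ = (h/D)·((a₁c₂−a₂c₁)(px+qy) − (a₂c₃−a₃c₂)p + (a₁c₃−a₃c₁)q). -/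

import Mathlib

private lemma affine_hasFDerivAt (a b c : ℝ) (P : ℝ × ℝ) :
    HasFDerivAt (fun P : ℝ × ℝ => a * P.1 + b * P.2 + c)
      (a • ContinuousLinearMap.fst ℝ ℝ ℝ + b • ContinuousLinearMap.snd ℝ ℝ ℝ) P := by
  have h1 : HasFDerivAt (fun P : ℝ × ℝ => P.1) (ContinuousLinearMap.fst ℝ ℝ ℝ) P :=
    hasFDerivAt_fst
  have h2 : HasFDerivAt (fun P : ℝ × ℝ => P.2) (ContinuousLinearMap.snd ℝ ℝ ℝ) P :=
    hasFDerivAt_snd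
  exact ((h1.const_mul a).add (h2.const_mul b)).add_const c

/-- First prolongation of the projective action: transformation law of the first-order
partial derivatives of a scalar function under a fractional linear change of variables. -/
theorem first_prolongation_of_projective_action
    (a1 a2 a3 b1 b2 b3 c1 c2 c3 x y : ℝ)
    (hD : Matrix.det !![a1, a2, a3; b1, b2, b3; c1, c2, c3] ≠ 0)
    (hh : c1 * x + c2 * y + c3 ≠ 0)
    (u ut : ℝ × ℝ → ℝ)
    (hu : DifferentiableAt ℝ u (x, y))
    (hut : DifferentiableAt ℝ ut
      ((a1 * x + a2 * y + a3) / (c1 * x + c2 * y + c3),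
       (b1 * x + b2 * y + b3) / (c1 * x + c2 * y + c3)))
    (hcomp : ∀ᶠ P : ℝ × ℝ in nhds (x, y),
      ut ((a1 * P.1 + a2 * P.2 + a3) / (c1 * P.1 + c2 * P.2 + c3),
          (b1 * P.1 + b2 * P.2 + b3) / (c1 * P.1 + c2 * P.2 + c3)) = u P)
    (p q : ℝ)
    (hp : p = fderiv ℝ u (x, y) (1, 0))
    (hq : q = fderiv ℝ u (x, y) (0, 1)) :
    fderiv ℝ ut
        ((a1 * x + a2 * y + a3) / (c1 * x + c2 * y + c3),
         (b1 * x + b2 * y + b3) / (c1 * x + c2 * y + c3)) (1, 0)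
      = ((c1 * x + c2 * y + c3) / Matrix.det !![a1, a2, a3; b1, b2, b3; c1, c2, c3]) *
        (-(b1 * c2 - b2 * c1) * (p * x + q * y) + (b2 * c3 - b3 * c2) * p
          - (b1 * c3 - b3 * c1) * q) ∧
    fderiv ℝ ut
        ((a1 * x + a2 * y + a3) / (c1 * x + c2 * y + c3),
         (b1 * x + b2 * y + b3) / (c1 * x + c2 * y + c3)) (0, 1)
      = ((c1 * x + c2 * y + c3) / Matrix.det !![a1, a2, a3; b1, b2, b3; c1, c2, c3]) *
        ((a1 * c2 - a2 * c1) * (p * x + q * y) - (a2 * c3 - a3 * c2) * p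
          + (a1 * c3 - a3 * c1) * q) := by
  set L : (ℝ × ℝ) →L[ℝ] ℝ := fderiv ℝ ut
    ((a1 * x + a2 * y + a3) / (c1 * x + c2 * y + c3),
     (b1 * x + b2 * y + b3) / (c1 * x + c2 * y + c3)) with hL
  set P : ℝ := L (1, 0) with hPdef
  set Q : ℝ := L (0, 1) with hQdef
  have lemL : ∀ α β : ℝ, L (α, β) = α * P + β * Q := by
    intro α β
    have hv : (α, β) = α • ((1 : ℝ), (0 : ℝ)) + β • ((0 : ℝ), (1 : ℝ)) := by simp
    rw [hv, map_add, map_smul, map_smul, smul_eq_mul, smul_eq_mul]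
  -- derivatives of the affine pieces
  have hg := affine_hasFDerivAt c1 c2 c3 (x, y)
  have hf1 := affine_hasFDerivAt a1 a2 a3 (x, y)
  have hf2 := affine_hasFDerivAt b1 b2 b3 (x, y)
  have hh' : c1 * (x, y).1 + c2 * (x, y).2 + c3 ≠ 0 := hh
  have hinv : HasFDerivAt (fun P : ℝ × ℝ => (c1 * P.1 + c2 * P.2 + c3)⁻¹)
      ((-((c1 * (x, y).1 + c2 * (x, y).2 + c3) ^ 2)⁻¹) •
        (c1 • ContinuousLinearMap.fst ℝ ℝ ℝ + c2 • ContinuousLinearMap.snd ℝ ℝ ℝ)) (x, y) :=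
    HasDerivAt.comp_hasFDerivAt (𝕜 := ℝ) (x, y) (hasDerivAt_inv hh') hg
  have hT1 := hf1.fun_mul hinv
  have hT2 := hf2.fun_mul hinv
  simp only [← div_eq_mul_inv] at hT1 hT2
  have hT := hT1.prodMk hT2
  have hutT : HasFDerivAt ut L
      ((fun P : ℝ × ℝ =>
        ((a1 * P.1 + a2 * P.2 + a3) / (c1 * P.1 + c2 * P.2 + c3),
         (b1 * P.1 + b2 * P.2 + b3) / (c1 * P.1 + c2 * P.2 + c3))) (x, y)) :=
    hut.hasFDerivAt
  have hcompD := hutT.comp (x, y) hT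
  have huD : HasFDerivAt u (L.comp _) (x, y) :=
    hcompD.congr_of_eventuallyEq (hcomp.mono fun P hP => hP.symm)
  have hfd : fderiv ℝ u (x, y) = _ := huD.fderiv
  set h : ℝ := c1 * x + c2 * y + c3 with hdefh
  set N1 : ℝ := a1 * x + a2 * y + a3 with hdefN1
  set N2 : ℝ := b1 * x + b2 * y + b3 with hdefN2
  have e1 : h ^ 2 * p = P * (a1 * h - N1 * c1) + Q * (b1 * h - N2 * c1) := by
    rw [hp, hfd]
    simp only [ContinuousLinearMap.comp_apply, ContinuousLinearMap.prod_apply,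
      ContinuousLinearMap.add_apply, ContinuousLinearMap.smul_apply,
      ContinuousLinearMap.smulRight_apply, ContinuousLinearMap.coe_fst',
      ContinuousLinearMap.coe_snd', smul_eq_mul, lemL]
    field_simp
    ring
  have e2 : h ^ 2 * q = P * (a2 * h - N1 * c2) + Q * (b2 * h - N2 * c2) := by
    rw [hq, hfd]
    simp only [ContinuousLinearMap.comp_apply, ContinuousLinearMap.prod_apply,
      ContinuousLinearMap.add_apply, ContinuousLinearMap.smul_apply,
      ContinuousLinearMap.smulRight_apply, ContinuousLinearMap.coe_fst',
      ContinuousLinearMap.coe_snd', smul_eq_mul, lemL]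
    field_simp
    ring
  have hDet : Matrix.det !![a1, a2, a3; b1, b2, b3; c1, c2, c3]
      = a1 * (b2 * c3 - b3 * c2) - a2 * (b1 * c3 - b3 * c1) + a3 * (b1 * c2 - b2 * c1) := by
    simp [Matrix.det_fin_three]; ring
  rw [hDet] at hD ⊢
  have hh2 : h ^ 2 ≠ 0 := pow_ne_zero 2 hh
  constructor
  · show P = _
    rw [div_mul_eq_mul_div, eq_div_iff hD]
    apply mul_right_cancel₀ hh2
    linear_combination (-(h * (-(b1 * c2 - b2 * c1) * x + (b2 * c3 - b3 * c2)))) * e1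
      - (h * (-(b1 * c2 - b2 * c1) * y - (b1 * c3 - b3 * c1))) * e2
  · show Q = _
    rw [div_mul_eq_mul_div, eq_div_iff hD]
    apply mul_right_cancel₀ hh2
    linear_combination (-(h * ((a1 * c2 - a2 * c1) * x - (a2 * c3 - a3 * c2)))) * e1
      - (h * ((a1 * c2 - a2 * c1) * y + (a1 * c3 - a3 * c1))) * e2
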